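/- Let P be a finite set of points and L a finite set of lines in a plane, and set λ = max{4, 4|L|²/I(P,L)} (assuming I(P,L) > 0). If P₁ is the set of points in P incident to at most λ lines of L, then I(P₁,L) ≥ I(P,L)/2. -/

import Mathlib

open scoped Classical

/-- A line in the plane `F × F`. -/
def IsLine {F : Type*} [Field F] (l : Set (F × F)) : Prop :=
  ∃ a b c : F, (a ≠ 0 ∨ b ≠ 0) ∧ l = {p : F × F | a * p.1 + b * p.2 = c}

/-- The number of incidences between a finite set of points and a finite set of lines. -/
noncomputable def nInc {F : Type*} [Field F] (P : Finset (F × F))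
    (L : Finset (Set (F × F))) : ℕ :=
  ∑ p ∈ P, (L.filter fun l => p ∈ l).card

lemma two_lines_meet' {F : Type*} [Field F] {a1 b1 c1 a2 b2 c2 : F}
    (hab1 : a1 ≠ 0 ∨ b1 ≠ 0) (hab2 : a2 ≠ 0 ∨ b2 ≠ 0)
    (hne : {p : F × F | a1 * p.1 + b1 * p.2 = c1} ≠ {p : F × F | a2 * p.1 + b2 * p.2 = c2})
    {p q : F × F}
    (hp1 : a1 * p.1 + b1 * p.2 = c1) (hp2 : a2 * p.1 + b2 * p.2 = c2)
    (hq1 : a1 * q.1 + b1 * q.2 = c1) (hq2 : a2 * q.1 + b2 * q.2 = c2) : p = q := by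
  by_contra hpq
  have e1 : a1 * (p.1 - q.1) + b1 * (p.2 - q.2) = 0 := by linear_combination hp1 - hq1
  have e2 : a2 * (p.1 - q.1) + b2 * (p.2 - q.2) = 0 := by linear_combination hp2 - hq2
  have hd : p.1 - q.1 ≠ 0 ∨ p.2 - q.2 ≠ 0 := by
    by_contra h
    push_neg at h
    exact hpq (Prod.ext (sub_eq_zero.mp h.1) (sub_eq_zero.mp h.2))
  have hD : a1 * b2 - a2 * b1 = 0 := by
    rcases hd with hd | hd
    · have : (a1 * b2 - a2 * b1) * (p.1 - q.1) = 0 := by linear_combination b2 * e1 - b1 * e2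
      exact (mul_eq_zero.mp this).resolve_right hd
    · have : (a1 * b2 - a2 * b1) * (p.2 - q.2) = 0 := by linear_combination a1 * e2 - a2 * e1
      exact (mul_eq_zero.mp this).resolve_right hd
  apply hne
  rcases hab2 with ha2 | hb2
  · set t := a1 / a2 with ht
    have hta : a1 = t * a2 := (div_mul_cancel₀ a1 ha2).symm
    have htb : b1 = t * b2 := by
      rw [ht, div_mul_eq_mul_div, eq_div_iff ha2]; linear_combination -hD
    have htc : c1 = t * c2 := by
      rw [← hp1, ← hp2]; rw [hta, htb]; ring
    have htne : t ≠ 0 := by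
      intro h0
      rcases hab1 with h | h
      · exact h (by rw [hta, h0, zero_mul])
      · exact h (by rw [htb, h0, zero_mul])
    ext x
    simp only [Set.mem_setOf_eq, hta, htb, htc]
    constructor
    · intro h; exact mul_left_cancel₀ htne (by linear_combination h)
    · intro h; linear_combination t * h
  · set t := b1 / b2 with ht
    have htb : b1 = t * b2 := (div_mul_cancel₀ b1 hb2).symm
    have hta : a1 = t * a2 := by
      rw [ht, div_mul_eq_mul_div, eq_div_iff hb2]; linear_combination hD
    have htc : c1 = t * c2 := by rw [← hp1, ← hp2]; rw [hta, htb]; ring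
    have htne : t ≠ 0 := by
      intro h0
      rcases hab1 with h | h
      · exact h (by rw [hta, h0, zero_mul])
      · exact h (by rw [htb, h0, zero_mul])
    ext x
    simp only [Set.mem_setOf_eq, hta, htb, htc]
    constructor
    · intro h; exact mul_left_cancel₀ htne (by linear_combination h)
    · intro h; linear_combination t * h

lemma two_lines_meet {F : Type*} [Field F] {l1 l2 : Set (F × F)}
    (h1 : IsLine l1) (h2 : IsLine l2) (hne : l1 ≠ l2) {p q : F × F}
    (hp1 : p ∈ l1) (hp2 : p ∈ l2) (hq1 : q ∈ l1) (hq2 : q ∈ l2) : p = q := by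
  obtain ⟨a1, b1, c1, hab1, rfl⟩ := h1
  obtain ⟨a2, b2, c2, hab2, rfl⟩ := h2
  exact two_lines_meet' hab1 hab2 hne hp1 hp2 hq1 hq2

lemma key_count {F : Type*} [Field F] (P : Finset (F × F)) (L : Finset (Set (F × F)))
    (hL : ∀ l ∈ L, IsLine l) :
    ∑ p ∈ P, ((L.filter fun l => p ∈ l).offDiag.card) ≤ L.offDiag.card := by
  have h1 : ∀ p : F × F, (L.filter fun l => p ∈ l).offDiag
      = L.offDiag.filter (fun q => p ∈ q.1 ∧ p ∈ q.2) := by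
    intro p
    ext q
    simp only [Finset.mem_offDiag, Finset.mem_filter]
    tauto
  simp_rw [h1]
  have h2 : ∑ p ∈ P, (L.offDiag.filter fun q => p ∈ q.1 ∧ p ∈ q.2).card
      = ∑ q ∈ L.offDiag, (P.filter fun p => p ∈ q.1 ∧ p ∈ q.2).card := by
    simp_rw [Finset.card_filter]
    exact Finset.sum_comm
  rw [h2]
  calc ∑ q ∈ L.offDiag, (P.filter fun p => p ∈ q.1 ∧ p ∈ q.2).card
      ≤ ∑ _q ∈ L.offDiag, 1 := by
        apply Finset.sum_le_sum
        intro q hq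
        rw [Finset.mem_offDiag] at hq
        apply Finset.card_le_one.mpr
        intro a ha b hb
        rw [Finset.mem_filter] at ha hb
        exact two_lines_meet (hL _ hq.1) (hL _ hq.2.1) hq.2.2 ha.2.1 ha.2.2 hb.2.1 hb.2.2
    _ = L.offDiag.card := by simp

theorem stmt2 {F : Type*} [Field F] (P : Finset (F × F)) (L : Finset (Set (F × F)))
    (hL : ∀ l ∈ L, IsLine l) (hI : 0 < nInc P L)
    (lam : ℝ) (hlam : lam = max 4 (4 * (L.card : ℝ) ^ 2 / (nInc P L : ℝ)))
    (P₁ : Finset (F × F))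
    (hP₁ : P₁ = P.filter fun p => ((L.filter fun l => p ∈ l).card : ℝ) ≤ lam) :
    (nInc P L : ℝ) / 2 ≤ (nInc P₁ L : ℝ) := by
  classical
  set d : F × F → ℕ := fun p => (L.filter fun l => p ∈ l).card with hd
  set P₂ : Finset (F × F) := P.filter fun p => ¬ ((d p : ℝ) ≤ lam) with hP₂
  -- split
  have hsplit : (nInc P L : ℝ) = (nInc P₁ L : ℝ) + ∑ p ∈ P₂, (d p : ℝ) := by
    have : nInc P L = nInc P₁ L + ∑ p ∈ P₂, d p := by
      rw [hP₁, hP₂, nInc, nInc]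
      rw [← Finset.sum_filter_add_sum_filter_not P (fun p => ((d p : ℝ) ≤ lam))]
    rw [this]
    push_cast
    ring
  set S : ℝ := ∑ p ∈ P₂, (d p : ℝ) with hS
  set I : ℝ := (nInc P L : ℝ) with hIr
  set B : ℝ := (L.card : ℝ) ^ 2 with hB
  have hIpos : 0 < I := by rw [hIr]; exact_mod_cast hI
  have hlam4 : (4:ℝ) ≤ lam := by rw [hlam]; exact le_max_left _ _
  have hlamI : 4 * B ≤ lam * I := by
    have h := le_max_right (4:ℝ) (4 * B / I)
    rw [← hlam, div_le_iff₀ hIpos] at h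
    linarith
  have hLne : L.Nonempty := by
    by_contra h
    rw [Finset.not_nonempty_iff_eq_empty] at h
    subst h
    simp [nInc] at hI
  have hBpos : 0 < B := by
    rw [hB]
    have : 0 < L.card := Finset.card_pos.mpr hLne
    positivity
  have hSnn : 0 ≤ S := Finset.sum_nonneg fun p _ => Nat.cast_nonneg _
  -- per point bound on P₂
  have hpt : ∀ p ∈ P₂, (3/4) * lam * (d p : ℝ)
      ≤ (((L.filter fun l => p ∈ l).offDiag.card : ℕ) : ℝ) := by
    intro p hp
    rw [hP₂, Finset.mem_filter] at hp
    have hdp : lam < (d p : ℝ) := lt_of_not_ge hp.2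
    have hdp1 : 1 ≤ d p := by
      rcases Nat.eq_zero_or_pos (d p) with h | h
      · rw [h] at hdp; push_cast at hdp; linarith
      · exact h
    have hle : d p ≤ d p * d p := Nat.le_mul_of_pos_left _ hdp1
    rw [Finset.offDiag_card, Nat.cast_sub hle]
    push_cast
    set D : ℝ := (d p : ℝ)
    have h1 : D - 1 - (3/4) * lam ≥ 0 := by linarith
    nlinarith [mul_nonneg (le_of_lt (lt_trans (by linarith : (0:ℝ) < lam) hdp)) h1]
  -- sum it up
  have hkey : (3/4) * lam * S ≤ B := by
    have hsum1 : (3/4) * lam * S = ∑ p ∈ P₂, (3/4) * lam * (d p : ℝ) := by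
      rw [hS, Finset.mul_sum]
    have hsum2 : ∑ p ∈ P₂, (3/4) * lam * (d p : ℝ)
        ≤ ∑ p ∈ P₂, (((L.filter fun l => p ∈ l).offDiag.card : ℕ) : ℝ) :=
      Finset.sum_le_sum hpt
    have hsub : P₂ ⊆ P := by rw [hP₂]; exact Finset.filter_subset _ _
    have hsum3 : ∑ p ∈ P₂, ((L.filter fun l => p ∈ l).offDiag.card)
        ≤ ∑ p ∈ P, ((L.filter fun l => p ∈ l).offDiag.card) :=
      Finset.sum_le_sum_of_subset hsub
    have hsum4 := key_count P L hL
    have hsum5 : L.offDiag.card ≤ L.card ^ 2 := by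
      rw [Finset.offDiag_card]
      have := Nat.sub_le (L.card * L.card) L.card
      nlinarith [this]
    have : ∑ p ∈ P₂, ((L.filter fun l => p ∈ l).offDiag.card) ≤ L.card ^ 2 :=
      le_trans hsum3 (le_trans hsum4 hsum5)
    have hcast : (∑ p ∈ P₂, (((L.filter fun l => p ∈ l).offDiag.card : ℕ) : ℝ)) ≤ B := by
      rw [hB]
      push_cast [← Nat.cast_sum]
      exact_mod_cast this
    linarith [hsum1 ▸ le_trans hsum2 hcast]
  -- conclude
  have h3 : B * (3 * S) ≤ B * I := by
    nlinarith [mul_le_mul_of_nonneg_right hkey hIpos.le,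
      mul_le_mul_of_nonneg_right hlamI hSnn]
  have hS3 : 3 * S ≤ I := le_of_mul_le_mul_left h3 hBpos
  have hnn : (0:ℝ) ≤ (nInc P₁ L : ℝ) := Nat.cast_nonneg _
  linarith [hsplit]
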